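/- arXiv:1909.12334 — 4 statements merged into one kernel-verified Lean document; each statement's English description precedes it below -/
import Mathlib

section
/- The Brownian motion kernel K(x,y) = min(x,y) on [0,s]×[0,s] admits the uniformly convergent expansion K(x,y) = Σ over odd m ∈ ℕ of (4s²/(m²π²)) · (2/s) · sin(πmx/(2s)) · sin(πmy/(2s)). -/
open Real

lemma bern2 (t : ℝ) : (Polynomial.map (algebraMap ℚ ℝ) (Polynomial.bernoulli (2*1))).eval t
    = t^2 - t + 1/6 := by
  norm_num [Polynomial.bernoulli, Finset.sum_range_succ, bernoulli_one, bernoulli_zero]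
  norm_num [bernoulli]
  ring

lemma oddCos {θ : ℝ} (h0 : 0 ≤ θ) (hπ : θ ≤ π) :
    HasSum (fun m : ℕ => if Odd m then Real.cos (m * θ) / (m : ℝ)^2 else 0)
      (π^2/8 - π*θ/4) := by
  have hπ0 : (0:ℝ) < π := Real.pi_pos
  have hx1 : θ/(2*π) ∈ Set.Icc (0:ℝ) 1 :=
    ⟨by positivity, by rw [div_le_one (by positivity)]; linarith⟩
  have hx2 : θ/π ∈ Set.Icc (0:ℝ) 1 := ⟨by positivity, by rw [div_le_one hπ0]; linarith⟩
  have hA := hasSum_one_div_nat_pow_mul_cos one_ne_zero hx1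
  have hB := hasSum_one_div_nat_pow_mul_cos one_ne_zero hx2
  have harg1 : ∀ n : ℕ, 2*π*(n:ℝ)*(θ/(2*π)) = n*θ := fun n => by field_simp
  have harg2 : ∀ n : ℕ, 2*π*(n:ℝ)*(θ/π) = 2*(n:ℝ)*θ := fun n => by field_simp
  simp only [harg1] at hA
  simp only [harg2] at hB
  have hA' : HasSum (fun n : ℕ => Real.cos ((n:ℝ)*θ)/(n:ℝ)^2) (θ^2/4 - π*θ/2 + π^2/6) := by
    convert hA using 1
    · funext n; ring
    · rw [bern2]; norm_num [Nat.factorial]; field_simp; ring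
  have hB' : HasSum (fun n : ℕ => Real.cos (2*(n:ℝ)*θ)/(2*(n:ℝ))^2)
      ((θ^2 - π*θ + π^2/6)/4) := by
    convert hB.mul_left (1/4) using 1
    · rfl
    · funext n; ring
    · rw [bern2]; norm_num [Nat.factorial]; field_simp
  set e : ℕ → ℝ := fun m => if Odd m then 0 else Real.cos (m*θ)/(m:ℝ)^2 with he
  have hinj : Function.Injective (fun n : ℕ => 2*n) := fun a b h => by simpa using h
  have hsupp : ∀ m ∉ Set.range (fun n : ℕ => 2*n), e m = 0 := by
    intro m hm
    have : Odd m := by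
      rcases Nat.even_or_odd m with hev | hod
      · obtain ⟨r, hr⟩ := hev
        exact absurd ⟨r, by simp; omega⟩ hm
      · exact hod
    simp [he, this]
  have hE : HasSum e ((θ^2 - π*θ + π^2/6)/4) := by
    rw [← Function.Injective.hasSum_iff hinj hsupp]
    convert hB' using 1
    funext n
    simp [he, Function.comp, Nat.odd_iff, Nat.mul_mod_right]
  have := hA'.sub hE
  convert this using 1
  · rfl
  · funext m
    by_cases h : Odd m <;> simp [he, h]
  · ring

/-- Fourier expansion of the Brownian motion kernel `min(x,y)` on `[0,s] × [0,s]`: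
`min(x,y) = Σ_{m odd} (4s²/(m²π²)) · (2/s) · sin(πmx/(2s)) · sin(πmy/(2s))`. -/
theorem brownian_kernel_expansion (s : ℝ) (hs : 0 < s) (x y : ℝ)
    (hx : x ∈ Set.Icc 0 s) (hy : y ∈ Set.Icc 0 s) :
    min x y =
      ∑' m : ℕ, if Odd m then
        (4 * s ^ 2 / ((m : ℝ) ^ 2 * π ^ 2)) * (2 / s) *
          Real.sin (π * m * x / (2 * s)) * Real.sin (π * m * y / (2 * s))
      else 0 := by
  obtain ⟨hx0, hxs⟩ := hx
  obtain ⟨hy0, hys⟩ := hy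
  have hπ0 : (0:ℝ) < π := Real.pi_pos
  set θ₁ : ℝ := π * |x - y| / (2*s) with hθ₁
  set θ₂ : ℝ := π * (x + y) / (2*s) with hθ₂
  have habs : |x - y| ≤ s := abs_le.mpr ⟨by linarith, by linarith⟩
  have h1a : 0 ≤ θ₁ := div_nonneg (by positivity) (by linarith)
  have h1b : θ₁ ≤ π := by
    rw [hθ₁, div_le_iff₀ (by linarith)]
    nlinarith [abs_nonneg (x - y)]
  have h2a : 0 ≤ θ₂ := div_nonneg (by nlinarith) (by linarith)
  have h2b : θ₂ ≤ π := by
    rw [hθ₂, div_le_iff₀ (by linarith)]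
    nlinarith
  have h₁ := oddCos h1a h1b
  have h₂ := oddCos h2a h2b
  have H := (h₁.sub h₂).mul_left (4*s/π^2)
  have hmin : min x y = 4*s/π^2 * ((π^2/8 - π*θ₁/4) - (π^2/8 - π*θ₂/4)) := by
    rcases le_total x y with h | h
    · rw [min_eq_left h, hθ₁, hθ₂, abs_of_nonpos (by linarith)]
      field_simp
      ring
    · rw [min_eq_right h, hθ₁, hθ₂, abs_of_nonneg (by linarith)]
      field_simp
      ring
  have hfun : (fun m : ℕ => 4*s/π^2 * ((if Odd m then Real.cos (m * θ₁) / (m : ℝ)^2 else 0)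
        - (if Odd m then Real.cos (m * θ₂) / (m : ℝ)^2 else 0)))
      = fun m : ℕ => if Odd m then
          (4 * s ^ 2 / ((m : ℝ) ^ 2 * π ^ 2)) * (2 / s) *
            Real.sin (π * m * x / (2 * s)) * Real.sin (π * m * y / (2 * s)) else 0 := by
    funext m
    by_cases hm : Odd m
    · simp only [if_pos hm]
      have hm0 : (m : ℝ) ≠ 0 := by
        have : m ≠ 0 := by rintro rfl; simp [Nat.odd_iff] at hm
        exact_mod_cast this
      have hc1 : (m : ℝ) * θ₁ = |π * m * x / (2 * s) - π * m * y / (2 * s)| := by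
        have e1 : π * (m:ℝ) * x / (2 * s) - π * m * y / (2 * s) = (π * m / (2*s)) * (x - y) := by
          ring
        rw [e1, abs_mul, abs_of_nonneg (by positivity : (0:ℝ) ≤ π * m / (2*s)), hθ₁]
        ring
      have hc2 : (m : ℝ) * θ₂ = π * m * x / (2 * s) + π * m * y / (2 * s) := by
        rw [hθ₂]; ring
      rw [hc1, hc2, Real.cos_abs, Real.cos_sub, Real.cos_add]
      field_simp
      ring
    · simp [hm]
  rw [hmin]
  exact (hfun ▸ H).tsum_eq.symm
end

section
/- For d ≥ 1 and s > 0 and any x, y in the closed ball of radius s in ℝ^d, one has ∫_{−s}^{s} ∫_{S^{d−1}} |1_{⟨z,x⟩ ≥ r} − 1_{⟨z,y⟩ ≥ r}|² dσ(z) dr = (Γ(d/2)/(√π · Γ((d+1)/2))) · ‖x − y‖. -/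
open MeasureTheory Real

section Aux

variable {d : ℕ}

lemma integral_Ioc_ind (s a b : ℝ) (hb1 : -s ≤ b) (hba : b ≤ a) (ha2 : a ≤ s) :
    (∫ r in Set.Ioc (-s) s,
      |(if r ≤ a then (1:ℝ) else 0) - (if r ≤ b then (1:ℝ) else 0)| ^ 2) = a - b := by
  have hpt : ∀ r : ℝ, |(if r ≤ a then (1:ℝ) else 0) - (if r ≤ b then (1:ℝ) else 0)| ^ 2
      = Set.indicator (Set.Ioc b a) (fun _ => (1:ℝ)) r := by
    intro r
    by_cases h1 : r ≤ b
    · have h2 : r ≤ a := h1.trans hba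
      simp [Set.indicator_apply, Set.mem_Ioc, h1, h2, not_lt.2 h1]
    · by_cases h2 : r ≤ a
      · simp [Set.indicator_apply, Set.mem_Ioc, h1, h2, not_le.1 h1]
      · simp [Set.indicator_apply, Set.mem_Ioc, h1, h2]
  simp_rw [hpt]
  rw [setIntegral_indicator measurableSet_Ioc,
    Set.inter_eq_self_of_subset_right (Set.Ioc_subset_Ioc hb1 ha2),
    setIntegral_const, Real.volume_real_Ioc_of_le hba, smul_eq_mul, mul_one]

lemma integral_Ioc_ind' (s a b : ℝ) (ha1 : -s ≤ a) (ha2 : a ≤ s) (hb1 : -s ≤ b) (hb2 : b ≤ s) :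
    (∫ r in Set.Ioc (-s) s,
      |(if r ≤ a then (1:ℝ) else 0) - (if r ≤ b then (1:ℝ) else 0)| ^ 2) = |a - b| := by
  rcases le_total b a with h | h
  · rw [integral_Ioc_ind s a b hb1 h ha2, abs_of_nonneg (by linarith)]
  · have heq : ∀ r : ℝ, |(if r ≤ a then (1:ℝ) else 0) - (if r ≤ b then (1:ℝ) else 0)| ^ 2
        = |(if r ≤ b then (1:ℝ) else 0) - (if r ≤ a then (1:ℝ) else 0)| ^ 2 := fun r => by
      rw [abs_sub_comm]
    simp_rw [heq]
    rw [integral_Ioc_ind s b a ha1 h hb2, abs_of_nonpos (by linarith)]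
    ring

lemma sigma_rot (σ : Measure (EuclideanSpace ℝ (Fin d)))
    (hinv : ∀ f : EuclideanSpace ℝ (Fin d) ≃ₗᵢ[ℝ] EuclideanSpace ℝ (Fin d), σ.map f = σ)
    (u v : EuclideanSpace ℝ (Fin d)) (h : ‖u‖ = ‖v‖) :
    ∫ z, |(inner ℝ z u : ℝ)| ∂σ = ∫ z, |(inner ℝ z v : ℝ)| ∂σ := by
  set f : EuclideanSpace ℝ (Fin d) ≃ₗᵢ[ℝ] EuclideanSpace ℝ (Fin d) :=
    Submodule.reflection (Submodule.span ℝ {v - u})ᗮ with hfdef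
  have hfv : f v = u := Submodule.reflection_sub h.symm
  have hcont : Continuous fun z : EuclideanSpace ℝ (Fin d) => |(inner ℝ z u : ℝ)| :=
    (continuous_id.inner continuous_const).abs
  calc ∫ z, |(inner ℝ z u : ℝ)| ∂σ = ∫ z, |(inner ℝ z u : ℝ)| ∂(σ.map f) := by rw [hinv f]
    _ = ∫ z, |(inner ℝ (f z) u : ℝ)| ∂σ :=
        integral_map f.continuous.measurable.aemeasurable hcont.aestronglyMeasurable
    _ = ∫ z, |(inner ℝ z v : ℝ)| ∂σ := by
        congr 1; funext z
        rw [← hfv, f.inner_map_map]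

lemma sigma_inner (σ : Measure (EuclideanSpace ℝ (Fin d)))
    (hinv : ∀ f : EuclideanSpace ℝ (Fin d) ≃ₗᵢ[ℝ] EuclideanSpace ℝ (Fin d), σ.map f = σ)
    (e : EuclideanSpace ℝ (Fin d)) (he : ‖e‖ = 1) (w : EuclideanSpace ℝ (Fin d)) :
    ∫ z, |(inner ℝ z w : ℝ)| ∂σ = (∫ z, |(inner ℝ z e : ℝ)| ∂σ) * ‖w‖ := by
  rcases eq_or_ne w 0 with rfl | hw
  · simp
  · have hn : ‖w‖ ≠ 0 := norm_ne_zero_iff.2 hw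
    have hu : ‖(‖w‖⁻¹ • w : EuclideanSpace ℝ (Fin d))‖ = 1 := by
      rw [norm_smul, norm_inv, norm_norm, inv_mul_cancel₀ hn]
    have hw' : w = ‖w‖ • (‖w‖⁻¹ • w) := (smul_inv_smul₀ hn w).symm
    calc ∫ z, |(inner ℝ z w : ℝ)| ∂σ
        = ∫ z, ‖w‖ * |(inner ℝ z (‖w‖⁻¹ • w : EuclideanSpace ℝ (Fin d)) : ℝ)| ∂σ := by
          congr 1; funext z
          conv_lhs => rw [hw']
          rw [real_inner_smul_right, abs_mul, abs_of_nonneg (norm_nonneg w)]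
      _ = ‖w‖ * ∫ z, |(inner ℝ z (‖w‖⁻¹ • w : EuclideanSpace ℝ (Fin d)) : ℝ)| ∂σ :=
          integral_const_mul _ _
      _ = ‖w‖ * ∫ z, |(inner ℝ z e : ℝ)| ∂σ := by
          rw [sigma_rot σ hinv _ e (by rw [hu, he])]
      _ = _ := mul_comm _ _

lemma vol_rot (u v : EuclideanSpace ℝ (Fin d)) (h : ‖u‖ = ‖v‖) :
    ∫ w : EuclideanSpace ℝ (Fin d), |(inner ℝ w u : ℝ)| * rexp (-‖w‖ ^ 2)
      = ∫ w : EuclideanSpace ℝ (Fin d), |(inner ℝ w v : ℝ)| * rexp (-‖w‖ ^ 2) := by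
  set f : EuclideanSpace ℝ (Fin d) ≃ₗᵢ[ℝ] EuclideanSpace ℝ (Fin d) :=
    Submodule.reflection (Submodule.span ℝ {u - v})ᗮ with hfdef
  have hfu : f u = v := Submodule.reflection_sub h
  have key := f.measurePreserving.integral_comp f.toHomeomorph.measurableEmbedding
      (fun w : EuclideanSpace ℝ (Fin d) => |(inner ℝ w v : ℝ)| * rexp (-‖w‖ ^ 2))
  rw [← key]
  congr 1; funext w
  rw [← hfu, f.inner_map_map, f.norm_map]

lemma K_eq (i₀ : Fin d) :
    ∫ w : EuclideanSpace ℝ (Fin d),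
        |(inner ℝ w (EuclideanSpace.single i₀ (1:ℝ)) : ℝ)| * rexp (-‖w‖ ^ 2)
      = Real.sqrt π ^ (d - 1) := by
  have h1 : ∀ w : EuclideanSpace ℝ (Fin d),
      |(inner ℝ w (EuclideanSpace.single i₀ (1:ℝ)) : ℝ)| * rexp (-‖w‖ ^ 2)
        = ∏ i, ((if i = i₀ then |w i| else 1) * rexp (-(w i) ^ 2)) := by
    intro w
    rw [Finset.prod_mul_distrib]
    congr 1
    · rw [Finset.prod_ite_eq' Finset.univ i₀ (fun i => |w i|)]
      simp [EuclideanSpace.inner_single_right]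
    · rw [← Real.exp_sum]
      congr 1
      have hn : ‖w‖ ^ 2 = ∑ i, (w i) ^ 2 := by
        rw [EuclideanSpace.norm_eq, Real.sq_sqrt (by positivity)]
        simp [Real.norm_eq_abs, sq_abs]
      rw [hn, ← Finset.sum_neg_distrib]
  simp_rw [h1]
  have h2 := (EuclideanSpace.volume_preserving_symm_measurableEquiv_toLp (Fin d)).integral_comp
      (MeasurableEquiv.measurableEmbedding _)
      (fun v : Fin d → ℝ => ∏ i, ((if i = i₀ then |v i| else 1) * rexp (-(v i) ^ 2)))
  rw [show (∫ w : EuclideanSpace ℝ (Fin d),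
        ∏ i, ((if i = i₀ then |w i| else 1) * rexp (-(w i) ^ 2)))
      = ∫ v : Fin d → ℝ, ∏ i, ((if i = i₀ then |v i| else 1) * rexp (-(v i) ^ 2)) from h2]
  rw [MeasureTheory.integral_fintype_prod_volume_eq_prod
      (fun i (t : ℝ) => (if i = i₀ then |t| else 1) * rexp (-t ^ 2))]
  have hint0 : (∫ t : ℝ, |t| * rexp (-t ^ 2)) = 1 := by
    have h5 : (∫ t : ℝ, |t| * rexp (-|t| ^ 2))
        = 2 * ∫ x in Set.Ioi (0:ℝ), x * rexp (-x ^ 2) :=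
      integral_comp_abs (f := fun u : ℝ => u * rexp (-u ^ 2))
    have h3 : (∫ t : ℝ, |t| * rexp (-t ^ 2)) = ∫ t : ℝ, |t| * rexp (-|t| ^ 2) := by
      congr 1; funext t; rw [sq_abs]
    rw [h3, h5]
    have h4 : (∫ x in Set.Ioi (0:ℝ), x * rexp (-x ^ 2))
        = ∫ x in Set.Ioi (0:ℝ), x ^ (1:ℝ) * rexp (-x ^ (2:ℝ)) := by
      refine setIntegral_congr_fun measurableSet_Ioi (fun x hx => ?_)
      rw [Real.rpow_one]
      congr 2
      rw [← Real.rpow_natCast x 2]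
      norm_num
    rw [h4, integral_rpow_mul_exp_neg_rpow (by norm_num) (by norm_num)]
    norm_num [Real.Gamma_one]
  have hint1 : (∫ t : ℝ, rexp (-t ^ 2)) = Real.sqrt π := by
    have := integral_gaussian 1
    simpa using this
  have hfac : ∀ i : Fin d, (∫ t : ℝ, (if i = i₀ then |t| else 1) * rexp (-t ^ 2))
      = if i = i₀ then 1 else Real.sqrt π := by
    intro i
    by_cases h : i = i₀
    · simp only [h, if_true]; exact hint0
    · simp only [h, if_false, one_mul]; exact hint1
  simp_rw [hfac]
  rw [← Finset.mul_prod_erase Finset.univ _ (Finset.mem_univ i₀), if_pos rfl, one_mul,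
    Finset.prod_congr rfl (fun i hi => if_neg (Finset.ne_of_mem_erase hi)), Finset.prod_const,
    Finset.card_erase_of_mem (Finset.mem_univ i₀), Finset.card_univ, Fintype.card_fin]

lemma integrable_norm_exp :
    Integrable (fun w : EuclideanSpace ℝ (Fin d) => ‖w‖ * rexp (-‖w‖ ^ 2)) := by
  have hmaj : Integrable (fun w : EuclideanSpace ℝ (Fin d) => rexp (-(1/2) * ‖w‖ ^ 2)) := by
    have h := GaussianFourier.integrable_cexp_neg_mul_sq_norm_add
      (b := (1/2 : ℂ)) (by norm_num) 0 (0 : EuclideanSpace ℝ (Fin d))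
    have h2 := h.norm
    refine h2.congr (Filter.Eventually.of_forall fun w => ?_)
    have harg : (-(1/2 : ℂ) * (‖w‖ : ℂ) ^ 2
        + 0 * ((inner ℝ (0 : EuclideanSpace ℝ (Fin d)) w : ℝ) : ℂ))
        = ((-(1/2) * ‖w‖ ^ 2 : ℝ) : ℂ) := by push_cast; ring
    simp only [harg, Complex.norm_exp, Complex.ofReal_re]
  refine hmaj.mono' ?_ (Filter.Eventually.of_forall fun w => ?_)
  · exact (continuous_norm.mul
      (Real.continuous_exp.comp ((continuous_norm.pow 2).neg))).aestronglyMeasurable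
  · rw [Real.norm_eq_abs, abs_of_nonneg (by positivity)]
    have h1 : ‖w‖ ≤ rexp ((1/2) * ‖w‖ ^ 2) := by
      have h2 := Real.add_one_le_exp ((1/2) * ‖w‖ ^ 2)
      nlinarith [sq_nonneg (‖w‖ - 1), norm_nonneg w]
    calc ‖w‖ * rexp (-‖w‖ ^ 2) ≤ rexp ((1/2) * ‖w‖ ^ 2) * rexp (-‖w‖ ^ 2) :=
          mul_le_mul_of_nonneg_right h1 (Real.exp_nonneg _)
      _ = rexp (-(1/2) * ‖w‖ ^ 2) := by rw [← Real.exp_add]; ring_nf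

lemma I1_eq (hd : 1 ≤ d) :
    ∫ w : EuclideanSpace ℝ (Fin d), ‖w‖ * rexp (-‖w‖ ^ 2)
      = d * (Real.sqrt π ^ d / Real.Gamma (d / 2 + 1)) * (Real.Gamma ((d + 1) / 2) / 2) := by
  haveI : Nonempty (Fin d) := ⟨⟨0, hd⟩⟩
  haveI : Nontrivial (EuclideanSpace ℝ (Fin d)) :=
    ⟨⟨0, EuclideanSpace.single ⟨0, hd⟩ 1, fun h => by
      have h2 := congrArg (fun v : EuclideanSpace ℝ (Fin d) => ‖v‖) h
      simp [EuclideanSpace.norm_single] at h2⟩⟩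
  have h : (∫ w : EuclideanSpace ℝ (Fin d), ‖w‖ * rexp (-‖w‖ ^ 2))
      = Module.finrank ℝ (EuclideanSpace ℝ (Fin d)) •
        (volume (Metric.ball (0 : EuclideanSpace ℝ (Fin d)) 1)).toReal •
        ∫ y in Set.Ioi (0:ℝ),
          y ^ (Module.finrank ℝ (EuclideanSpace ℝ (Fin d)) - 1) • (y * rexp (-y ^ 2)) :=
    integral_fun_norm_addHaar volume (fun y => y * rexp (-y ^ 2))
  rw [finrank_euclideanSpace_fin] at h
  have hball : (volume (Metric.ball (0 : EuclideanSpace ℝ (Fin d)) 1)).toReal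
      = Real.sqrt π ^ d / Real.Gamma (d / 2 + 1) := by
    rw [EuclideanSpace.volume_ball]
    simp only [Fintype.card_fin, ENNReal.ofReal_one, one_pow, one_mul]
    rw [ENNReal.toReal_ofReal]
    exact div_nonneg (pow_nonneg (Real.sqrt_nonneg _) _)
      (Real.Gamma_pos_of_pos (by positivity)).le
  have hrad : (∫ y in Set.Ioi (0:ℝ), y ^ (d - 1) • (y * rexp (-y ^ 2)))
      = Real.Gamma ((d + 1) / 2) / 2 := by
    have h1 : ∀ y ∈ Set.Ioi (0:ℝ),
        y ^ (d - 1) • (y * rexp (-y ^ 2)) = y ^ ((d:ℝ)) * rexp (-y ^ (2:ℝ)) := by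
      intro y hy
      rw [smul_eq_mul, ← mul_assoc, ← pow_succ, Nat.sub_add_cancel hd]
      congr 1
      · rw [← Real.rpow_natCast y d]
      · congr 1
        rw [← Real.rpow_natCast y 2]
        norm_num
    rw [setIntegral_congr_fun measurableSet_Ioi h1,
      integral_rpow_mul_exp_neg_rpow (by norm_num)
        (by exact neg_one_lt_zero.trans_le (Nat.cast_nonneg d))]
    ring
  rw [h, hball, hrad, nsmul_eq_mul, smul_eq_mul]
  ring

lemma ae_norm_one (σ : Measure (EuclideanSpace ℝ (Fin d))) [IsProbabilityMeasure σ]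
    (hsupp : σ (Metric.sphere (0 : EuclideanSpace ℝ (Fin d)) 1) = 1) :
    ∀ᵐ z ∂σ, ‖z‖ = 1 := by
  have h : σ (Metric.sphere (0 : EuclideanSpace ℝ (Fin d)) 1)ᶜ = 0 := by
    rw [measure_compl Metric.isClosed_sphere.measurableSet (measure_ne_top σ _), hsupp, measure_univ, tsub_self]
  rw [ae_iff]
  refine measure_mono_null (fun z hz => ?_) h
  simp only [Set.mem_setOf_eq] at hz
  simp only [Set.mem_compl_iff, Metric.mem_sphere, dist_zero_right]
  exact hz

lemma meas_ind (x : EuclideanSpace ℝ (Fin d)) :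
    Measurable (fun p : ℝ × EuclideanSpace ℝ (Fin d) =>
      if p.1 ≤ (inner ℝ p.2 x : ℝ) then (1:ℝ) else 0) := by
  have hcl : IsClosed {p : ℝ × EuclideanSpace ℝ (Fin d) | p.1 ≤ (inner ℝ p.2 x : ℝ)} :=
    isClosed_le continuous_fst (continuous_snd.inner continuous_const)
  exact Measurable.ite hcl.measurableSet measurable_const measurable_const

lemma c_eq (hd : 1 ≤ d) (σ : Measure (EuclideanSpace ℝ (Fin d))) [IsProbabilityMeasure σ]
    (hsupp : σ (Metric.sphere (0 : EuclideanSpace ℝ (Fin d)) 1) = 1)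
    (hinv : ∀ f : EuclideanSpace ℝ (Fin d) ≃ₗᵢ[ℝ] EuclideanSpace ℝ (Fin d), σ.map f = σ) :
    (∫ z, |(inner ℝ z (EuclideanSpace.single (⟨0, hd⟩ : Fin d) (1:ℝ)) : ℝ)| ∂σ)
      = Real.Gamma (d / 2) / (Real.sqrt π * Real.Gamma ((d + 1) / 2)) := by
  set e : EuclideanSpace ℝ (Fin d) := EuclideanSpace.single (⟨0, hd⟩ : Fin d) (1:ℝ) with he
  have hene : ‖e‖ = 1 := by rw [he, EuclideanSpace.norm_single]; norm_num
  set c : ℝ := ∫ z, |(inner ℝ z e : ℝ)| ∂σ with hc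
  have hΦcont : Continuous (fun p : EuclideanSpace ℝ (Fin d) × EuclideanSpace ℝ (Fin d) =>
      |(inner ℝ p.1 p.2 : ℝ)| * rexp (-‖p.2‖ ^ 2)) :=
    ((continuous_fst.inner continuous_snd).abs).mul
      (Real.continuous_exp.comp ((continuous_snd.norm.pow 2).neg))
  have hΦint : Integrable (Function.uncurry fun (z w : EuclideanSpace ℝ (Fin d)) =>
      |(inner ℝ z w : ℝ)| * rexp (-‖w‖ ^ 2)) (σ.prod volume) := by
    have hz : Integrable (fun z : EuclideanSpace ℝ (Fin d) => ‖z‖) σ := by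
      refine Integrable.mono' (integrable_const 1) continuous_norm.aestronglyMeasurable ?_
      filter_upwards [ae_norm_one σ hsupp] with z hz
      rw [Real.norm_eq_abs, abs_of_nonneg (norm_nonneg z), hz]
    have hw := integrable_norm_exp (d := d)
    have hprod := hz.smul_prod hw
    refine Integrable.mono' hprod hΦcont.aestronglyMeasurable
      (Filter.Eventually.of_forall fun p => ?_)
    show ‖|(inner ℝ p.1 p.2 : ℝ)| * rexp (-‖p.2‖ ^ 2)‖ ≤ ‖p.1‖ * (‖p.2‖ * rexp (-‖p.2‖ ^ 2))
    rw [Real.norm_eq_abs, abs_of_nonneg (by positivity)]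
    calc |(inner ℝ p.1 p.2 : ℝ)| * rexp (-‖p.2‖ ^ 2)
        ≤ (‖p.1‖ * ‖p.2‖) * rexp (-‖p.2‖ ^ 2) :=
          mul_le_mul_of_nonneg_right (abs_real_inner_le_norm p.1 p.2) (Real.exp_nonneg _)
      _ = ‖p.1‖ * (‖p.2‖ * rexp (-‖p.2‖ ^ 2)) := by ring
  have hswap := integral_integral_swap hΦint
  have hL : (∫ z, ∫ w : EuclideanSpace ℝ (Fin d),
      |(inner ℝ z w : ℝ)| * rexp (-‖w‖ ^ 2) ∂volume ∂σ) = Real.sqrt π ^ (d - 1) := by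
    have hcong : ∀ᵐ z ∂σ, (∫ w : EuclideanSpace ℝ (Fin d),
        |(inner ℝ z w : ℝ)| * rexp (-‖w‖ ^ 2)) = Real.sqrt π ^ (d - 1) := by
      filter_upwards [ae_norm_one σ hsupp] with z hz
      have h1 : ∀ w : EuclideanSpace ℝ (Fin d), |(inner ℝ z w : ℝ)| = |(inner ℝ w z : ℝ)| :=
        fun w => by rw [real_inner_comm]
      simp_rw [h1]
      rw [vol_rot z e (by rw [hz, hene])]
      exact K_eq ⟨0, hd⟩
    rw [integral_congr_ae hcong, integral_const, probReal_univ, one_smul]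
  have hR : (∫ w : EuclideanSpace ℝ (Fin d),
      ∫ z, |(inner ℝ z w : ℝ)| * rexp (-‖w‖ ^ 2) ∂σ ∂volume)
      = c * ((d:ℝ) * (Real.sqrt π ^ d / Real.Gamma (d / 2 + 1))
          * (Real.Gamma ((d + 1) / 2) / 2)) := by
    have h1 : ∀ w : EuclideanSpace ℝ (Fin d),
        (∫ z, |(inner ℝ z w : ℝ)| * rexp (-‖w‖ ^ 2) ∂σ) = c * (‖w‖ * rexp (-‖w‖ ^ 2)) := by
      intro w
      rw [integral_mul_const, sigma_inner σ hinv e hene w]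
      ring
    simp_rw [h1]
    rw [integral_const_mul, I1_eq hd]
  have hKey : c * ((d:ℝ) * (Real.sqrt π ^ d / Real.Gamma (d / 2 + 1))
      * (Real.Gamma ((d + 1) / 2) / 2)) = Real.sqrt π ^ (d - 1) := by
    rw [← hR, ← hswap, hL]
  have hd0 : (0:ℝ) < d := by exact_mod_cast Nat.lt_of_lt_of_le Nat.zero_lt_one hd
  have hΓ1 : 0 < Real.Gamma ((d:ℝ) / 2) := Real.Gamma_pos_of_pos (by positivity)
  have hΓ2 : 0 < Real.Gamma (((d:ℝ) + 1) / 2) := Real.Gamma_pos_of_pos (by positivity)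
  have hsπ : 0 < Real.sqrt π := Real.sqrt_pos.2 Real.pi_pos
  have hPpos : 0 < Real.sqrt π ^ (d - 1) := pow_pos hsπ _
  have hΓadd : Real.Gamma ((d:ℝ) / 2 + 1) = ((d:ℝ) / 2) * Real.Gamma ((d:ℝ) / 2) :=
    Real.Gamma_add_one (by positivity)
  have hpow : Real.sqrt π ^ d = Real.sqrt π ^ (d - 1) * Real.sqrt π := by
    conv_lhs => rw [show d = (d - 1) + 1 from (Nat.sub_add_cancel hd).symm]
    rw [pow_succ]
  rw [hΓadd, hpow] at hKey
  have h4 : ((d:ℝ) * Real.sqrt π ^ (d - 1)) *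
      (c * (Real.sqrt π * Real.Gamma (((d:ℝ) + 1) / 2)))
      = ((d:ℝ) * Real.sqrt π ^ (d - 1)) * Real.Gamma ((d:ℝ) / 2) := by
    field_simp at hKey
    linear_combination ((d:ℝ) * Real.sqrt π ^ (d - 1)) * hKey
  have h5 := mul_left_cancel₀ (mul_pos hd0 hPpos).ne' h4
  rw [eq_div_iff (mul_pos hsπ hΓ2).ne']
  linarith [h5]

end Aux

/-- For `d ≥ 1`, `s > 0`, and the normalized rotation-invariant surface measure `σ` on the
unit sphere `S^{d-1} ⊂ ℝ^d`, the L₂-discrepancy of two point measures with respect to the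
family of half-spaces `{z : ⟨z,w⟩ ≥ r}` equals `(Γ(d/2)/(√π Γ((d+1)/2))) ‖x - y‖` on the
closed ball of radius `s`. -/
theorem halfspace_discrepancy_eq_dist (d : ℕ) (hd : 1 ≤ d) (s : ℝ) (hs : 0 < s)
    (σ : Measure (EuclideanSpace ℝ (Fin d))) (hσ : IsProbabilityMeasure σ)
    (hsupp : σ (Metric.sphere (0 : EuclideanSpace ℝ (Fin d)) 1) = 1)
    (hinv : ∀ f : EuclideanSpace ℝ (Fin d) ≃ₗᵢ[ℝ] EuclideanSpace ℝ (Fin d),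
      σ.map f = σ)
    (x y : EuclideanSpace ℝ (Fin d)) (hx : ‖x‖ ≤ s) (hy : ‖y‖ ≤ s) :
    (∫ r in (-s)..s, ∫ z,
        |(if r ≤ (inner ℝ z x : ℝ) then (1 : ℝ) else 0) -
         (if r ≤ (inner ℝ z y : ℝ) then (1 : ℝ) else 0)| ^ 2 ∂σ) =
    (Real.Gamma (d / 2) / (Real.sqrt π * Real.Gamma ((d + 1) / 2))) * ‖x - y‖ := by
  haveI := hσ
  have hss : -s ≤ s := by linarith
  rw [intervalIntegral.integral_of_le hss]
  haveI : IsFiniteMeasure (volume.restrict (Set.Ioc (-s) s)) := ⟨by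
    rw [Measure.restrict_apply_univ, Real.volume_Ioc]; exact ENNReal.ofReal_lt_top⟩
  have hmeas : Measurable (Function.uncurry fun (r : ℝ) (z : EuclideanSpace ℝ (Fin d)) =>
      |(if r ≤ (inner ℝ z x : ℝ) then (1:ℝ) else 0) -
       (if r ≤ (inner ℝ z y : ℝ) then (1:ℝ) else 0)| ^ 2) :=
    (((meas_ind x).sub (meas_ind y)).abs).pow_const 2
  have hbd : ∀ p : ℝ × EuclideanSpace ℝ (Fin d),
      ‖(Function.uncurry fun (r : ℝ) (z : EuclideanSpace ℝ (Fin d)) =>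
        |(if r ≤ (inner ℝ z x : ℝ) then (1:ℝ) else 0) -
         (if r ≤ (inner ℝ z y : ℝ) then (1:ℝ) else 0)| ^ 2) p‖ ≤ 1 := by
    intro p
    show ‖|(if p.1 ≤ (inner ℝ p.2 x : ℝ) then (1:ℝ) else 0) -
       (if p.1 ≤ (inner ℝ p.2 y : ℝ) then (1:ℝ) else 0)| ^ 2‖ ≤ 1
    have h1 : ∀ u v : ℝ, u = 0 ∨ u = 1 → v = 0 ∨ v = 1 → ‖|u - v| ^ 2‖ ≤ 1 := by
      rintro u v (rfl | rfl) (rfl | rfl) <;> norm_num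
    exact h1 _ _ (by split <;> simp) (by split <;> simp)
  have hint : Integrable (Function.uncurry fun (r : ℝ) (z : EuclideanSpace ℝ (Fin d)) =>
      |(if r ≤ (inner ℝ z x : ℝ) then (1:ℝ) else 0) -
       (if r ≤ (inner ℝ z y : ℝ) then (1:ℝ) else 0)| ^ 2)
      ((volume.restrict (Set.Ioc (-s) s)).prod σ) :=
    (integrable_const 1).mono' hmeas.aestronglyMeasurable (Filter.Eventually.of_forall hbd)
  have hcongr : ∀ᵐ z ∂σ, (∫ r in Set.Ioc (-s) s,
      |(if r ≤ (inner ℝ z x : ℝ) then (1:ℝ) else 0) -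
       (if r ≤ (inner ℝ z y : ℝ) then (1:ℝ) else 0)| ^ 2)
      = |(inner ℝ z (x - y) : ℝ)| := by
    filter_upwards [ae_norm_one σ hsupp] with z hz
    have hxa : |(inner ℝ z x : ℝ)| ≤ s := by
      have h := abs_real_inner_le_norm z x
      rw [hz, one_mul] at h
      exact h.trans hx
    have hya : |(inner ℝ z y : ℝ)| ≤ s := by
      have h := abs_real_inner_le_norm z y
      rw [hz, one_mul] at h
      exact h.trans hy
    rw [integral_Ioc_ind' s (inner ℝ z x : ℝ) (inner ℝ z y : ℝ)
      (neg_le_of_abs_le hxa) (le_of_abs_le hxa) (neg_le_of_abs_le hya) (le_of_abs_le hya),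
      ← inner_sub_right]
  calc (∫ r in Set.Ioc (-s) s, ∫ z,
        |(if r ≤ (inner ℝ z x : ℝ) then (1:ℝ) else 0) -
         (if r ≤ (inner ℝ z y : ℝ) then (1:ℝ) else 0)| ^ 2 ∂σ)
      = ∫ z, (∫ r in Set.Ioc (-s) s,
        |(if r ≤ (inner ℝ z x : ℝ) then (1:ℝ) else 0) -
         (if r ≤ (inner ℝ z y : ℝ) then (1:ℝ) else 0)| ^ 2) ∂σ :=
        integral_integral_swap hint
    _ = ∫ z, |(inner ℝ z (x - y) : ℝ)| ∂σ := integral_congr_ae hcongr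
    _ = (∫ z, |(inner ℝ z (EuclideanSpace.single (⟨0, hd⟩ : Fin d) (1:ℝ)) : ℝ)| ∂σ) * ‖x - y‖ :=
        sigma_inner σ hinv _ (by rw [EuclideanSpace.norm_single]; norm_num) (x - y)
    _ = (Real.Gamma (d / 2) / (Real.sqrt π * Real.Gamma ((d + 1) / 2))) * ‖x - y‖ := by
        rw [c_eq hd σ hsupp hinv]
end

section
/- For α > 0, k ∈ ℕ, ω ∈ ℂ \ {0} and r > 0: ∫₀^r J_α(ωs) · s^{α+2k+1} ds = Σ_{i=0}^{k} (2^i (−k)_i / ω^{i+1}) · J_{α+i+1}(ωr) · r^{α+2k+1−i}, where J_ν is the Bessel function of the first kind and (−k)_i is the Pochhammer symbol. -/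
open MeasureTheory Complex

/-- The Bessel function of the first kind of (real) order `α`, as a function of a complex
argument, defined by its power series `J_α(z) = Σ_j (-1)^j (z/2)^(α+2j) / (j! Γ(α+j+1))`. -/
noncomputable def besselJ (α : ℝ) (z : ℂ) : ℂ :=
  ∑' j : ℕ, ((-1) ^ j / ((j.factorial : ℂ) * Complex.Gamma ((α : ℂ) + j + 1))) *
    (z / 2) ^ ((α : ℂ) + 2 * j)

/-- The Pochhammer symbol (rising factorial) `(a)_n = a(a+1)⋯(a+n-1)` in `ℂ`. -/
noncomputable def pochC (a : ℂ) (n : ℕ) : ℂ := ∏ j ∈ Finset.range n, (a + j)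

namespace BesselAux

lemma ofReal_mul_cpow {s : ℝ} (hs : 0 < s) {z : ℂ} (hz : z ≠ 0) (c : ℂ) :
    ((s : ℂ) * z) ^ c = (s : ℂ) ^ c * z ^ c := by
  have hs' : (s : ℂ) ≠ 0 := ofReal_ne_zero.mpr hs.ne'
  rw [Complex.cpow_def_of_ne_zero (mul_ne_zero hs' hz), Complex.cpow_def_of_ne_zero hs',
    Complex.cpow_def_of_ne_zero hz, Complex.log_ofReal_mul hs hz, ← Complex.ofReal_log hs.le,
    add_mul, Complex.exp_add, Complex.ofReal_log hs.le]

lemma fact_mul_Gamma_le (b : ℝ) (hb : 1 ≤ b) : ∀ j : ℕ, (j.factorial : ℝ) * Real.Gamma b ≤ Real.Gamma (b + j)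
  | 0 => by simp
  | (j+1) => by
      have hbp : (0:ℝ) < b := lt_of_lt_of_le one_pos hb
      have h1 : Real.Gamma (b + (j+1 : ℕ)) = (b + j) * Real.Gamma (b + j) := by
        have h : b + ((j:ℕ)+1 : ℕ) = (b + j) + 1 := by push_cast; ring
        rw [h, Real.Gamma_add_one (by positivity)]
      have h2 : ((Nat.factorial (j+1) : ℝ)) * Real.Gamma b
          = ((j:ℝ)+1) * ((j.factorial : ℝ) * Real.Gamma b) := by
        push_cast [Nat.factorial_succ]; ring
      rw [h1, h2]
      have hfg : (0:ℝ) ≤ (j.factorial : ℝ) * Real.Gamma b := by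
        have := Real.Gamma_pos_of_pos hbp; positivity
      refine mul_le_mul (by push_cast; linarith) (fact_mul_Gamma_le b hb j) hfg (by positivity)

lemma summable_master (β : ℝ) (hβ : 0 < β) (q : ℝ) (hq : 0 ≤ q) :
    Summable (fun j : ℕ => q ^ j / ((j.factorial : ℝ) * Real.Gamma (β + 1 + j))) := by
  have hΓ : (0:ℝ) < Real.Gamma (β + 1) := Real.Gamma_pos_of_pos (by linarith)
  refine Summable.of_nonneg_of_le (fun j => ?_) (fun j => ?_)
    (((Real.summable_pow_div_factorial q).mul_left (1 / Real.Gamma (β + 1))))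
  · have : (0:ℝ) < Real.Gamma (β + 1 + j) := Real.Gamma_pos_of_pos (by positivity)
    positivity
  · have hg := fact_mul_Gamma_le (β + 1) (by linarith) j
    have hΓj : (0:ℝ) < Real.Gamma (β + 1 + j) := Real.Gamma_pos_of_pos (by positivity)
    have hfact : (1:ℝ) ≤ (j.factorial : ℝ) := by exact_mod_cast j.factorial_pos
    have key : (j.factorial : ℝ) * Real.Gamma (β + 1) ≤ (j.factorial : ℝ) * Real.Gamma (β + 1 + j) := by
      nlinarith [Real.Gamma_pos_of_pos (show (0:ℝ) < β + 1 by linarith)]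
    calc q ^ j / ((j.factorial : ℝ) * Real.Gamma (β + 1 + j))
        ≤ q ^ j / ((j.factorial : ℝ) * Real.Gamma (β + 1)) := by
          apply div_le_div_of_nonneg_left (pow_nonneg hq j) (by positivity) key
      _ = 1 / Real.Gamma (β + 1) * (q ^ j / (j.factorial : ℝ)) := by
          rw [div_mul_div_comm, one_mul, mul_comm]


lemma pochC_zero (a : ℂ) : pochC a 0 = 1 := Finset.prod_range_zero _

lemma pochC_succ (a : ℂ) (n : ℕ) : pochC a (n+1) = pochC a n * (a + n) :=
  Finset.prod_range_succ _ _

lemma pochC_ne_zero {a : ℂ} (h : ∀ m : ℕ, a + m ≠ 0) (n : ℕ) : pochC a n ≠ 0 :=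
  Finset.prod_ne_zero_iff.mpr fun m _ => h m

lemma pochC_neg_self (k : ℕ) : pochC (-(k:ℂ)) (k+1) = 0 :=
  Finset.prod_eq_zero (Finset.self_mem_range_succ k) (by simp)

lemma poch_partial (k : ℕ) (β : ℂ) (hβ : ∀ m : ℕ, β + m ≠ 0) :
    ∀ m : ℕ, ∑ i ∈ Finset.range m, pochC (-(k:ℂ)) i / pochC β (i+1)
      = (1 - pochC (-(k:ℂ)) m / pochC β m) / (β + k) := by
  intro m; induction m with
  | zero => simp [pochC_zero]
  | succ m ih =>
    rw [Finset.sum_range_succ, ih, pochC_succ, pochC_succ]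
    have hQ : pochC β m ≠ 0 := pochC_ne_zero hβ m
    have h1 : β + (m:ℂ) ≠ 0 := hβ m
    have h2 : β + (k:ℂ) ≠ 0 := hβ k
    field_simp
    ring

lemma poch_sum (k : ℕ) (β : ℂ) (hβ : ∀ m : ℕ, β + m ≠ 0) :
    ∑ i ∈ Finset.range (k+1), pochC (-(k:ℂ)) i / pochC β (i+1) = 1 / (β + k) := by
  rw [poch_partial k β hβ (k+1), pochC_neg_self, zero_div, sub_zero]

lemma Gamma_add_nat (β : ℂ) (hβ : ∀ m : ℕ, β + m ≠ 0) (n : ℕ) :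
    Complex.Gamma (β + n) = Complex.Gamma β * pochC β n := by
  induction n with
  | zero => simp [pochC_zero]
  | succ n ih =>
    have h : β + ((n:ℕ)+1 : ℕ) = (β + n) + 1 := by push_cast; ring
    rw [h, Complex.Gamma_add_one (β + n) (hβ n), ih, pochC_succ]; ring

lemma scalar_id (k : ℕ) (β : ℝ) (hβ : 0 < β) :
    ∑ i ∈ Finset.range (k+1), pochC (-(k:ℂ)) i / (2 * Complex.Gamma ((β:ℂ) + i + 1))
      = 1 / (Complex.Gamma (β:ℂ) * (2 * ((β:ℂ) + k))) := by
  have hβ' : ∀ m : ℕ, (β:ℂ) + m ≠ 0 := fun m => by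
    have h : (β:ℂ) + m = ((β + m : ℝ) : ℂ) := by push_cast; ring
    rw [h]
    exact_mod_cast (show (β + m : ℝ) ≠ 0 by positivity)
  have hΓ : Complex.Gamma (β:ℂ) ≠ 0 := by
    rw [Complex.Gamma_ofReal]
    exact_mod_cast (Real.Gamma_pos_of_pos hβ).ne'
  have step : ∀ i ∈ Finset.range (k+1),
      pochC (-(k:ℂ)) i / (2 * Complex.Gamma ((β:ℂ) + i + 1))
        = pochC (-(k:ℂ)) i / pochC (β:ℂ) (i+1) * (1 / (2 * Complex.Gamma (β:ℂ))) := by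
    intro i _
    have h1 : (β:ℂ) + i + 1 = (β:ℂ) + ((i+1 : ℕ) : ℂ) := by push_cast; ring
    rw [h1, Gamma_add_nat _ hβ' (i+1)]
    have hP : pochC (β:ℂ) (i+1) ≠ 0 := pochC_ne_zero hβ' (i+1)
    rw [div_mul_div_comm, mul_one, div_eq_div_iff (by exact mul_ne_zero two_ne_zero (mul_ne_zero hΓ hP)) (by exact mul_ne_zero hP (mul_ne_zero two_ne_zero hΓ))]
    ring
  rw [Finset.sum_congr rfl step, ← Finset.sum_mul, poch_sum k _ hβ']
  have h2 : (β:ℂ) + k ≠ 0 := hβ' k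
  field_simp


lemma abs_coeff (β : ℝ) (hβ : 0 < β) (j : ℕ) :
    ‖(-1)^j / ((j.factorial : ℂ) * Complex.Gamma ((β:ℂ) + j + 1))‖ =
      1 / ((j.factorial : ℝ) * Real.Gamma (β + 1 + j)) := by
  have h1 : ((β:ℂ) + j + 1) = ((β + 1 + j : ℝ) : ℂ) := by push_cast; ring
  have hΓ : (0:ℝ) < Real.Gamma (β + 1 + j) := Real.Gamma_pos_of_pos (by positivity)
  rw [h1, Complex.Gamma_ofReal, norm_div, norm_pow, norm_neg, norm_one, one_pow,
    ← Complex.ofReal_natCast, ← Complex.ofReal_mul, Complex.norm_real, Real.norm_eq_abs,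
    abs_of_pos (by positivity)]

lemma rpow_split (A : ℝ) (hA : 0 < A) (a : ℝ) (j : ℕ) :
    A ^ (a + 2*(j:ℝ)) = A ^ a * (A^2)^j := by
  have h : (2*(j:ℝ)) = ((2*j : ℕ) : ℝ) := by push_cast; ring
  rw [Real.rpow_add hA, h, Real.rpow_natCast, pow_mul]

end BesselAux


namespace BesselAux

/-- The `j`-th term of the expanded integrand. -/
noncomputable def Fj (α : ℝ) (k : ℕ) (ω : ℂ) (j : ℕ) (s : ℝ) : ℂ :=
  ((-1)^j / ((j.factorial : ℂ) * Complex.Gamma ((α:ℂ) + j + 1)) * (ω/2) ^ ((α:ℂ) + 2*j)) *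
    (s:ℂ) ^ (2*(α:ℂ) + 2*j + 2*(k:ℂ) + 1)

/-- The `(i,j)` term of the right-hand side. -/
noncomputable def Uij (α : ℝ) (k : ℕ) (ω : ℂ) (r : ℝ) (i j : ℕ) : ℂ :=
  (2 ^ i * pochC (-(k : ℂ)) i / ω ^ (i + 1)) *
    (((-1) ^ j / ((j.factorial : ℂ) * Complex.Gamma (((α + i + 1 : ℝ) : ℂ) + j + 1))) *
      (ω * (r:ℂ) / 2) ^ (((α + i + 1 : ℝ) : ℂ) + 2 * j)) *
    (r : ℂ) ^ ((α : ℂ) + 2 * k + 1 - i)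

variable {α : ℝ} {k : ℕ} {ω : ℂ} {r : ℝ}

lemma expand_pt (hω : ω ≠ 0) {s : ℝ} (hs : 0 < s) :
    besselJ α (ω * s) * (s:ℂ) ^ ((α:ℂ) + 2*k + 1) = ∑' j, Fj α k ω j s := by
  have hw : ω / 2 ≠ 0 := div_ne_zero hω two_ne_zero
  have hsC : (s:ℂ) ≠ 0 := ofReal_ne_zero.mpr hs.ne'
  rw [besselJ, ← tsum_mul_right]
  refine tsum_congr fun j => ?_
  have h1 : ω * (s:ℂ) / 2 = (s:ℂ) * (ω/2) := by ring
  have h2 : (s:ℂ) ^ (2*(α:ℂ) + 2*j + 2*(k:ℂ) + 1)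
      = (s:ℂ)^((α:ℂ)+2*j) * (s:ℂ)^((α:ℂ)+2*(k:ℂ)+1) := by
    rw [← Complex.cpow_add _ _ hsC]; congr 1; ring
  rw [Fj, h1, ofReal_mul_cpow hs hw, h2]
  push_cast
  ring

lemma re_exp (α : ℝ) (k j : ℕ) :
    (2*(α:ℂ) + 2*(j:ℂ) + 2*(k:ℂ) + 1) = ((2*α + 2*(j:ℝ) + 2*(k:ℝ) + 1 : ℝ) : ℂ) := by
  push_cast; ring

lemma Fj_integrableOn (hα : 0 < α) (hr : 0 < r) (j : ℕ) :
    IntegrableOn (Fj α k ω j) (Set.Ioc 0 r) volume := by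
  have h : IntervalIntegrable (fun s : ℝ => (s:ℂ) ^ (2*(α:ℂ) + 2*(j:ℂ) + 2*(k:ℂ) + 1)) volume 0 r := by
    apply intervalIntegral.intervalIntegrable_cpow'
    rw [re_exp, Complex.ofReal_re]
    have : (0:ℝ) ≤ (j:ℝ) := j.cast_nonneg
    have : (0:ℝ) ≤ (k:ℝ) := k.cast_nonneg
    linarith
  have h2 := (intervalIntegrable_iff_integrableOn_Ioc_of_le hr.le).mp h
  exact h2.const_mul _

lemma Fj_norm_le (hα : 0 < α) (hω : ω ≠ 0) (hr : 0 < r) (j : ℕ) {s : ℝ}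
    (hs : s ∈ Set.Ioc (0:ℝ) r) :
    ‖Fj α k ω j s‖ ≤ (‖ω/2‖ ^ α * r ^ (2*α + 2*(k:ℝ) + 1)) *
      ((‖ω/2‖^2 * r^2)^j / ((j.factorial : ℝ) * Real.Gamma (α + 1 + j))) := by
  have hA : 0 < ‖ω/2‖ := norm_pos_iff.mpr (div_ne_zero hω two_ne_zero)
  have hΓ : (0:ℝ) < Real.Gamma (α + 1 + j) := Real.Gamma_pos_of_pos (by positivity)
  have he : ((α:ℂ) + 2*(j:ℂ)) = ((α + 2*(j:ℝ) : ℝ) : ℂ) := by push_cast; ring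
  have habs : ‖Fj α k ω j s‖ = (1 / ((j.factorial : ℝ) * Real.Gamma (α + 1 + j))) *
      (‖ω/2‖ ^ α * (‖ω/2‖^2)^j) *
      (s ^ (2*α + 2*(k:ℝ) + 1) * (s^2)^j) := by
    rw [Fj, norm_mul, norm_mul, abs_coeff α hα j, he, Complex.norm_cpow_real,
      Complex.norm_cpow_eq_rpow_re_of_pos hs.1, re_exp, Complex.ofReal_re,
      show (2*α + 2*(j:ℝ) + 2*(k:ℝ) + 1) = (2*α + 2*(k:ℝ) + 1) + 2*(j:ℝ) from by ring,
      rpow_split _ hA α j, rpow_split s hs.1 (2*α + 2*(k:ℝ) + 1) j]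
    try ring
  have h1 : s ^ (2*α + 2*(k:ℝ) + 1) ≤ r ^ (2*α + 2*(k:ℝ) + 1) :=
    Real.rpow_le_rpow hs.1.le hs.2 (by positivity)
  have h2 : (s^2)^j ≤ (r^2)^j := by
    apply pow_le_pow_left₀ (by positivity)
    nlinarith [hs.1, hs.2]
  calc ‖Fj α k ω j s‖
      = (1 / ((j.factorial : ℝ) * Real.Gamma (α + 1 + j))) *
        (‖ω/2‖ ^ α * (‖ω/2‖^2)^j) *
        (s ^ (2*α + 2*(k:ℝ) + 1) * (s^2)^j) := habs
    _ ≤ (1 / ((j.factorial : ℝ) * Real.Gamma (α + 1 + j))) *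
        (‖ω/2‖ ^ α * (‖ω/2‖^2)^j) *
        (r ^ (2*α + 2*(k:ℝ) + 1) * (r^2)^j) := by
        apply mul_le_mul_of_nonneg_left
        · apply mul_le_mul h1 h2 (by positivity) (Real.rpow_nonneg hr.le _)
        · have hAα : (0:ℝ) ≤ ‖ω/2‖ ^ α := Real.rpow_nonneg hA.le _
          positivity
    _ = (‖ω/2‖ ^ α * r ^ (2*α + 2*(k:ℝ) + 1)) *
        ((‖ω/2‖^2 * r^2)^j / ((j.factorial : ℝ) * Real.Gamma (α + 1 + j))) := by
        rw [mul_pow]; ring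

lemma Fj_summable_norm_integral (hα : 0 < α) (hω : ω ≠ 0) (hr : 0 < r) :
    Summable fun j : ℕ => ∫ s in Set.Ioc (0:ℝ) r, ‖Fj α k ω j s‖ := by
  have hA : 0 < ‖ω/2‖ := norm_pos_iff.mpr (div_ne_zero hω two_ne_zero)
  set K : ℝ := ‖ω/2‖ ^ α * r ^ (2*α + 2*(k:ℝ) + 1) with hK
  have hK0 : 0 ≤ K := by
    have := Real.rpow_nonneg hA.le α
    have := Real.rpow_nonneg hr.le (2*α + 2*(k:ℝ) + 1)
    positivity
  have hbd : ∀ j : ℕ, (∫ s in Set.Ioc (0:ℝ) r, ‖Fj α k ω j s‖)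
      ≤ (K * ((‖ω/2‖^2 * r^2)^j / ((j.factorial : ℝ) * Real.Gamma (α + 1 + j)))) * r := by
    intro j
    have hΓ : (0:ℝ) < Real.Gamma (α + 1 + j) := Real.Gamma_pos_of_pos (by positivity)
    have hc : ∀ s ∈ Set.Ioc (0:ℝ) r, ‖Fj α k ω j s‖
        ≤ K * ((‖ω/2‖^2 * r^2)^j / ((j.factorial : ℝ) * Real.Gamma (α + 1 + j))) :=
      fun s hs => Fj_norm_le hα hω hr j hs
    calc (∫ s in Set.Ioc (0:ℝ) r, ‖Fj α k ω j s‖)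
        ≤ ∫ _ in Set.Ioc (0:ℝ) r,
            K * ((‖ω/2‖^2 * r^2)^j / ((j.factorial : ℝ) * Real.Gamma (α + 1 + j))) := by
          apply setIntegral_mono_on (Fj_integrableOn hα hr j).norm
            (integrableOn_const measure_Ioc_lt_top.ne) measurableSet_Ioc hc
      _ = (K * ((‖ω/2‖^2 * r^2)^j / ((j.factorial : ℝ) * Real.Gamma (α + 1 + j)))) * r := by
          rw [setIntegral_const, smul_eq_mul, measureReal_def, Real.volume_Ioc, sub_zero,
            ENNReal.toReal_ofReal hr.le, mul_comm]
  refine Summable.of_nonneg_of_le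
    (fun j => integral_nonneg fun s => norm_nonneg _) hbd ?_
  have := ((summable_master α hα (‖ω/2‖^2 * r^2) (by positivity)).mul_left K).mul_right r
  simpa [mul_div_assoc] using this

lemma Fj_integral (hα : 0 < α) (hr : 0 < r) (j : ℕ) :
    (∫ s in Set.Ioc (0:ℝ) r, Fj α k ω j s)
      = ((-1)^j / ((j.factorial : ℂ) * Complex.Gamma ((α:ℂ) + j + 1)) * (ω/2) ^ ((α:ℂ) + 2*j)) *
        ((r:ℂ) ^ (2*(α:ℂ) + 2*(j:ℂ) + 2*(k:ℂ) + 1 + 1) / (2*(α:ℂ) + 2*(j:ℂ) + 2*(k:ℂ) + 1 + 1)) := by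
  have hre : (-1:ℝ) < (2*(α:ℂ) + 2*(j:ℂ) + 2*(k:ℂ) + 1).re := by
    rw [re_exp, Complex.ofReal_re]
    have h1 : (0:ℝ) ≤ (j:ℝ) := j.cast_nonneg
    have h2 : (0:ℝ) ≤ (k:ℝ) := k.cast_nonneg
    linarith
  have h0 : ((0:ℝ):ℂ) ^ (2*(α:ℂ) + 2*(j:ℂ) + 2*(k:ℂ) + 1 + 1) = 0 := by
    rw [Complex.ofReal_zero, Complex.zero_cpow]
    have hcast : 2*(α:ℂ) + 2*(j:ℂ) + 2*(k:ℂ) + 1 + 1 = ((2*α + 2*(j:ℝ) + 2*(k:ℝ) + 2 : ℝ):ℂ) := by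
      push_cast; ring
    rw [hcast, Ne, Complex.ofReal_eq_zero]
    have h1 : (0:ℝ) ≤ (j:ℝ) := j.cast_nonneg
    have h2 : (0:ℝ) ≤ (k:ℝ) := k.cast_nonneg
    intro h; linarith [h]
  have : (∫ s in Set.Ioc (0:ℝ) r, Fj α k ω j s)
      = ∫ s in (0:ℝ)..r, Fj α k ω j s := (intervalIntegral.integral_of_le hr.le).symm
  rw [this]
  simp only [Fj]
  rw [intervalIntegral.integral_const_mul, integral_cpow (Or.inl hre), h0, sub_zero]

lemma cpow_ne_zero' {x : ℂ} (hx : x ≠ 0) (y : ℂ) : x ^ y ≠ 0 := by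
  rw [Complex.cpow_def_of_ne_zero hx]; exact Complex.exp_ne_zero _

lemma Uij_tsum (i : ℕ) : ∑' j, Uij α k ω r i j
    = (2 ^ i * pochC (-(k : ℂ)) i / ω ^ (i + 1)) * besselJ (α + i + 1) (ω * r) *
        (r : ℂ) ^ ((α : ℂ) + 2 * k + 1 - i) := by
  simp only [Uij]
  rw [tsum_mul_right, tsum_mul_left, besselJ]

lemma Uij_summable (hα : 0 < α) (hω : ω ≠ 0) (hr : 0 < r) (i : ℕ) :
    Summable fun j => Uij α k ω r i j := by
  have hβ : (0:ℝ) < α + i + 1 := by positivity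
  have hB : 0 < ‖ω * r / 2‖ := by
    apply norm_pos_iff.mpr
    apply div_ne_zero (mul_ne_zero hω (ofReal_ne_zero.mpr hr.ne')) two_ne_zero
  set B : ℝ := ‖ω * r / 2‖ with hBdef
  set K : ℝ := ‖2 ^ i * pochC (-(k : ℂ)) i / ω ^ (i + 1)‖ * B ^ (α + i + 1) *
    ‖(r : ℂ) ^ ((α : ℂ) + 2 * k + 1 - i)‖ with hK
  refine Summable.of_norm_bounded
    (((summable_master (α + i + 1) hβ (B^2) (by positivity)).mul_left K)) fun j => ?_
  have he : (((α + (i:ℝ) + 1 : ℝ)) : ℂ) + 2 * j = (((α + i + 1) + 2*(j:ℝ) : ℝ) : ℂ) := by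
    push_cast; ring
  have : ‖Uij α k ω r i j‖ = K *
      ((B^2)^j / ((j.factorial : ℝ) * Real.Gamma ((α + i + 1) + 1 + j))) := by
    rw [Uij, norm_mul, norm_mul, norm_mul, abs_coeff (α + i + 1) hβ j, he,
      Complex.norm_cpow_real, rpow_split B hB (α + i + 1) j, hK]
    ring
  rw [this]

lemma term_id (hα : 0 < α) (hω : ω ≠ 0) (hr : 0 < r) (j : ℕ) :
    ((-1)^j / ((j.factorial : ℂ) * Complex.Gamma ((α:ℂ) + j + 1)) * (ω/2) ^ ((α:ℂ) + 2*j)) *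
        ((r:ℂ) ^ (2*(α:ℂ) + 2*(j:ℂ) + 2*(k:ℂ) + 1 + 1) / (2*(α:ℂ) + 2*(j:ℂ) + 2*(k:ℂ) + 1 + 1))
      = ∑ i ∈ Finset.range (k+1), Uij α k ω r i j := by
  set β : ℝ := α + j + 1 with hβdef
  have hβ : 0 < β := by positivity
  have hw : ω / 2 ≠ 0 := div_ne_zero hω two_ne_zero
  have hrC : (r:ℂ) ≠ 0 := ofReal_ne_zero.mpr hr.ne'
  have hΓβ : Complex.Gamma ((β:ℝ):ℂ) ≠ 0 := by
    rw [Complex.Gamma_ofReal]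
    exact_mod_cast (Real.Gamma_pos_of_pos hβ).ne'
  have hβk : ((β:ℝ):ℂ) + (k:ℂ) ≠ 0 := by
    have h : ((β:ℝ):ℂ) + (k:ℂ) = ((β + k : ℝ) : ℂ) := by push_cast; ring
    rw [h, Ne, Complex.ofReal_eq_zero]
    positivity
  have hfac : ((j.factorial : ℕ) : ℂ) ≠ 0 := by
    exact_mod_cast j.factorial_ne_zero
  have hU : ∀ i ∈ Finset.range (k+1), Uij α k ω r i j
      = pochC (-(k:ℂ)) i / (2 * Complex.Gamma (((β:ℝ):ℂ) + i + 1)) *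
        ((-1)^j / ((j.factorial : ℂ)) * (ω/2) ^ ((α:ℂ) + 2*j) *
          (r:ℂ) ^ (2*(α:ℂ) + 2*(j:ℂ) + 2*(k:ℂ) + 1 + 1)) := by
    intro i _
    have hΓi : Complex.Gamma (((β:ℝ):ℂ) + i + 1) ≠ 0 := by
      have h : ((β:ℝ):ℂ) + i + 1 = ((β + i + 1 : ℝ) : ℂ) := by push_cast; ring
      rw [h, Complex.Gamma_ofReal]
      exact_mod_cast (Real.Gamma_pos_of_pos (by positivity)).ne'
    have hsplit : (ω * (r:ℂ) / 2) = (r:ℂ) * (ω/2) := by ring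
    have h1 : (ω * (r:ℂ) / 2) ^ ((((α + (i:ℝ) + 1 : ℝ)) : ℂ) + 2 * (j:ℂ))
        = (r:ℂ) ^ ((((α + (i:ℝ) + 1 : ℝ)) : ℂ) + 2 * (j:ℂ)) *
          ((ω/2) ^ ((α:ℂ) + 2*(j:ℂ)) * (ω/2) ^ (i+1 : ℕ)) := by
      rw [hsplit, ofReal_mul_cpow hr hw]
      congr 1
      rw [show (((α + (i:ℝ) + 1 : ℝ)) : ℂ) + 2 * (j:ℂ) = ((α:ℂ) + 2*(j:ℂ)) + ((i+1 : ℕ) : ℂ) from by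
          push_cast; ring,
        Complex.cpow_add _ _ hw, Complex.cpow_natCast]
    have h2 : (r:ℂ) ^ (2*(α:ℂ) + 2*(j:ℂ) + 2*(k:ℂ) + 1 + 1)
        = (r:ℂ) ^ ((((α + (i:ℝ) + 1 : ℝ)) : ℂ) + 2 * (j:ℂ)) * (r:ℂ) ^ ((α:ℂ) + 2*(k:ℂ) + 1 - (i:ℂ)) := by
      rw [← Complex.cpow_add _ _ hrC]
      congr 1
      push_cast
      ring
    have h3 : Complex.Gamma ((((α + (i:ℝ) + 1 : ℝ)) : ℂ) + (j:ℂ) + 1)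
        = Complex.Gamma (((β:ℝ):ℂ) + i + 1) := by
      congr 1
      rw [hβdef]
      push_cast
      ring
    have hre : ((r:ℂ) ^ ((((α + (i:ℝ) + 1 : ℝ)) : ℂ) + 2 * (j:ℂ))) ≠ 0 := cpow_ne_zero' hrC _
    rw [Uij, h1, h3, h2, div_pow, pow_succ]
    field_simp [hω, hΓi, hfac]
    ring
  rw [Finset.sum_congr rfl hU, ← Finset.sum_mul, scalar_id k β hβ]
  have h4 : (α:ℂ) + (j:ℂ) + 1 = ((β:ℝ):ℂ) := by rw [hβdef]; push_cast; ring
  have h5 : 2*(α:ℂ) + 2*(j:ℂ) + 2*(k:ℂ) + 1 + 1 = 2 * (((β:ℝ):ℂ) + (k:ℂ)) := by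
    rw [hβdef]; push_cast; ring
  rw [h4, h5]
  field_simp [hΓβ, hβk, hfac]
  try ring
  try exact Or.inl trivial

end BesselAux

/-- For `α > 0`, `k ∈ ℕ`, `ω ∈ ℂ \ {0}` and `r > 0`:
`∫₀^r J_α(ωs) s^(α+2k+1) ds = Σ_{i=0}^k (2^i (-k)_i / ω^(i+1)) J_{α+i+1}(ωr) r^(α+2k+1-i)`. -/
theorem besselJ_moment_integral (α : ℝ) (hα : 0 < α) (k : ℕ) (ω : ℂ) (hω : ω ≠ 0)
    (r : ℝ) (hr : 0 < r) :
    (∫ s in (0 : ℝ)..r, besselJ α (ω * s) * (s : ℂ) ^ ((α : ℂ) + 2 * k + 1)) =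
    ∑ i ∈ Finset.range (k + 1),
      (2 ^ i * pochC (-(k : ℂ)) i / ω ^ (i + 1)) * besselJ (α + i + 1) (ω * r) *
        (r : ℂ) ^ ((α : ℂ) + 2 * k + 1 - i) := by

  rw [intervalIntegral.integral_of_le hr.le]
  rw [setIntegral_congr_fun measurableSet_Ioc
    (fun s hs => BesselAux.expand_pt hω hs.1 (α := α) (k := k))]
  rw [← integral_tsum_of_summable_integral_norm (fun j => BesselAux.Fj_integrableOn hα hr j)
    (BesselAux.Fj_summable_norm_integral hα hω hr)]
  calc (∑' j, ∫ s in Set.Ioc (0:ℝ) r, BesselAux.Fj α k ω j s)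
      = ∑' j, ∑ i ∈ Finset.range (k+1), BesselAux.Uij α k ω r i j := by
        refine tsum_congr fun j => ?_
        rw [BesselAux.Fj_integral hα hr j, BesselAux.term_id hα hω hr j]
    _ = ∑ i ∈ Finset.range (k+1), ∑' j, BesselAux.Uij α k ω r i j :=
        Summable.tsum_finsetSum (fun i _ => BesselAux.Uij_summable hα hω hr i)
    _ = ∑ i ∈ Finset.range (k + 1),
      (2 ^ i * pochC (-(k : ℂ)) i / ω ^ (i + 1)) * besselJ (α + i + 1) (ω * r) *
        (r : ℂ) ^ ((α : ℂ) + 2 * k + 1 - i) :=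
        Finset.sum_congr rfl (fun i _ => BesselAux.Uij_tsum i)
end

section
/- For α ∈ ℝ, k ∈ ℕ₀, and n ∈ ℕ with α ∉ {−(k+1), −k, …, −n}, the series Σ_{j=0}^{∞} (−k)_{n+j−1} / (α+n)_{j+1} equals (−k)_{n−1} / (α+k+1). -/
/-- The Pochhammer symbol (rising factorial) `(a)_n = a(a+1)⋯(a+n-1)` in `ℝ`. -/
noncomputable def poch (a : ℝ) (n : ℕ) : ℝ := ∏ j ∈ Finset.range n, (a + j)

lemma poch_succ (a : ℝ) (m : ℕ) : poch a (m + 1) = poch a m * (a + m) :=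
  Finset.prod_range_succ _ _

lemma poch_zero_of (k m : ℕ) (h : k + 1 ≤ m) : poch (-(k : ℝ)) m = 0 := by
  apply Finset.prod_eq_zero (Finset.mem_range.mpr (by omega : k < m))
  simp

/-- For `α ∈ ℝ`, `k ∈ ℕ`, `n ≥ 1` with `α ∉ {-(k+1), -k, …, -n}`:
`Σ_{j≥0} (-k)_{n+j-1} / (α+n)_{j+1} = (-k)_{n-1} / (α+k+1)`. -/
theorem pochhammer_series_identity (α : ℝ) (k : ℕ) (n : ℕ) (hn : 1 ≤ n)
    (hα : ∀ t : ℕ, n ≤ t → t ≤ k + 1 → α ≠ -(t : ℝ)) :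
    (∑' j : ℕ, poch (-(k : ℝ)) (n + j - 1) / poch (α + n) (j + 1)) =
      poch (-(k : ℝ)) (n - 1) / (α + k + 1) := by
  obtain ⟨m, rfl⟩ : ∃ m, n = m + 1 := ⟨n - 1, by omega⟩
  have hidx : ∀ j, m + 1 + j - 1 = m + j := fun j => by omega
  simp only [hidx, Nat.add_sub_cancel]
  rcases le_or_gt m k with hmk | hmk
  · -- main case : m ≤ k
    set J := k + 1 - m with hJ
    have hαt : ∀ i : ℕ, m + 1 + i ≤ k + 1 → α + ((m : ℝ) + 1) + i ≠ 0 := by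
      intro i hi h
      apply hα (m + 1 + i) (by omega) (by omega)
      push_cast
      linarith
    have hpne : ∀ j, m + j ≤ k → poch (α + ((m : ℝ) + 1)) j ≠ 0 := by
      intro j hj
      rw [poch]
      apply Finset.prod_ne_zero_iff.mpr
      intro i hi
      exact hαt i (by simp only [Finset.mem_range] at hi; omega)
    have hk1 : α + k + 1 ≠ 0 := by
      intro h
      apply hα (k + 1) (by omega) le_rfl
      push_cast
      linarith
    set A : ℕ → ℝ := fun j =>
      poch (-(k : ℝ)) (m + j) / ((α + k + 1) * poch (α + ((m : ℝ) + 1)) j) with hA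
    have hterm : ∀ j < J,
        poch (-(k : ℝ)) (m + j) / poch (α + ((m : ℝ) + 1)) (j + 1) = A j - A (j + 1) := by
      intro j hj
      have hmj : m + j ≤ k := by omega
      have hp1 : poch (α + ((m : ℝ) + 1)) j ≠ 0 := hpne j hmj
      have hfac : α + ((m : ℝ) + 1) + j ≠ 0 := hαt j (by omega)
      have e1 : poch (-(k : ℝ)) (m + (j + 1)) =
          poch (-(k : ℝ)) (m + j) * (-(k : ℝ) + (m + j : ℕ)) := by
        rw [show m + (j + 1) = (m + j) + 1 from rfl, poch_succ]
      have e2 : poch (α + ((m : ℝ) + 1)) (j + 1) =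
          poch (α + ((m : ℝ) + 1)) j * (α + ((m : ℝ) + 1) + j) := poch_succ _ _
      simp only [hA, e1, e2]
      push_cast
      field_simp
      ring
    have hsupp : ∀ j ∉ Finset.range J,
        poch (-(k : ℝ)) (m + j) / poch (α + ((m : ℝ) + 1)) (j + 1) = 0 := by
      intro j hj
      rw [poch_zero_of k (m + j) (by simp only [Finset.mem_range] at hj; omega), zero_div]
    have hcast : ((m + 1 : ℕ) : ℝ) = (m : ℝ) + 1 := by push_cast; ring
    rw [show ((m + 1 : ℕ) : ℝ) = (m : ℝ) + 1 from hcast] at *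
    rw [tsum_eq_sum hsupp,
      Finset.sum_congr rfl (fun j hj => hterm j (Finset.mem_range.mp hj)),
      Finset.sum_range_sub' A J]
    have hAJ : A J = 0 := by
      simp [hA, poch_zero_of k (m + J) (by omega)]
    have hA0 : A 0 = poch (-(k : ℝ)) m / (α + k + 1) := by
      simp [hA, poch]
    rw [hAJ, hA0, sub_zero]
  · -- degenerate case : m ≥ k + 1, everything vanishes
    have h0 : ∀ j, poch (-(k : ℝ)) (m + j) = 0 := fun j => poch_zero_of k (m + j) (by omega)
    simp [h0, poch_zero_of k m (by omega)]
end
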